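/- For every k ≥ 2 and every index i, the function h ↦ LN_k(h)_i − u_ex(h)_i is O(h³) as h → 0 from the right; i.e., all iterated linear-neighbour methods LN_2, LN_3, LN_4, … are at least second-order numerical methods for the linear ODE initial value problem du/dt = M u + Q, u(0) = u⁰ (Theorem 1, linear-neighbour part). -/

import Mathlib

open Finset NormedSpace Asymptotics
open scoped Topology

/-- `aCoef M Q v i = Σ_{j≠i} M_ij v_j + Q_i`. -/
noncomputable def aCoef {N : ℕ} (M : Matrix (Fin N) (Fin N) ℝ) (Q : Fin N → ℝ)
    (v : Fin N → ℝ) (i : Fin N) : ℝ :=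
  (∑ j ∈ Finset.univ.erase i, M i j * v j) + Q i

/-- The constant-neighbour step `F_h`. -/
noncomputable def cnStep {N : ℕ} (M : Matrix (Fin N) (Fin N) ℝ) (Q u0 : Fin N → ℝ)
    (h : ℝ) (v : Fin N → ℝ) : Fin N → ℝ :=
  fun i => u0 i * Real.exp (M i i * h)
    + (aCoef M Q v i / (-(M i i))) * (1 - Real.exp (M i i * h))

/-- The `k`-stage constant-neighbour approximation `CN_k(h) = F_h^[k] u⁰`. -/
noncomputable def CN {N : ℕ} (M : Matrix (Fin N) (Fin N) ℝ) (Q u0 : Fin N → ℝ)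
    (k : ℕ) (h : ℝ) : Fin N → ℝ :=
  (cnStep M Q u0 h)^[k] u0

/-- The effective slope `s_i(v) = (a_i(v) − a_i(u⁰))/h`. -/
noncomputable def sCoef {N : ℕ} (M : Matrix (Fin N) (Fin N) ℝ) (Q u0 : Fin N → ℝ)
    (h : ℝ) (v : Fin N → ℝ) (i : Fin N) : ℝ :=
  (aCoef M Q v i - aCoef M Q u0 i) / h

/-- The linear-neighbour step `G_h`, with `τ_i = −1/M_ii`. -/
noncomputable def lnStep {N : ℕ} (M : Matrix (Fin N) (Fin N) ℝ) (Q u0 : Fin N → ℝ)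
    (h : ℝ) (v : Fin N → ℝ) : Fin N → ℝ :=
  fun i =>
    u0 i * Real.exp (M i i * h)
      + (aCoef M Q u0 i * (-(M i i)⁻¹) - sCoef M Q u0 h v i * (-(M i i)⁻¹) ^ 2)
          * (1 - Real.exp (M i i * h))
      + sCoef M Q u0 h v i * (-(M i i)⁻¹) * h

/-- The `k`-stage linear-neighbour approximation `LN_k(h) = G_h^[k−1] (CN_1(h))`, `k ≥ 2`. -/
noncomputable def LN {N : ℕ} (M : Matrix (Fin N) (Fin N) ℝ) (Q u0 : Fin N → ℝ)
    (k : ℕ) (h : ℝ) : Fin N → ℝ :=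
  (lnStep M Q u0 h)^[k - 1] (cnStep M Q u0 h u0)

/-- The exact solution `u_ex(h) = e^{hM} u⁰ + ∫₀^h e^{(h−s)M} Q ds`. -/
noncomputable def uex {N : ℕ} (M : Matrix (Fin N) (Fin N) ℝ) (Q u0 : Fin N → ℝ)
    (h : ℝ) : Fin N → ℝ :=
  (exp (h • M)).mulVec u0 + ∫ s in (0:ℝ)..h, (exp ((h - s) • M)).mulVec Q


section AuxProof

lemma exp_taylor3_gen {A : Type*} [NormedRing A] [NormedAlgebra ℝ A] [CompleteSpace A] (M : A) :
    (fun h : ℝ => exp (h • M) - (1 + h • M + (h ^ 2 / 2) • (M * M))) =O[𝓝 (0:ℝ)]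
      fun h => h ^ 3 := by
  have H := (exp_hasFPowerSeriesAt_zero (𝕂 := ℝ) (𝔸 := A)).isBigO_sub_partialSum_pow 3
  have hsm : Filter.Tendsto (fun h : ℝ => h • M) (𝓝 0) (𝓝 (0 : A)) := by
    have hc : Continuous fun h : ℝ => h • M := continuous_id.smul continuous_const
    simpa using hc.tendsto 0
  have H2 := H.comp_tendsto hsm
  have hnorm : (fun h : ℝ => ‖h • M‖ ^ 3) =O[𝓝 (0:ℝ)] fun h => h ^ 3 := by
    refine IsBigO.of_bound (‖M‖ ^ 3) ?_
    filter_upwards with h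
    have h1 : ‖h • M‖ = |h| * ‖M‖ := by rw [norm_smul, Real.norm_eq_abs]
    refine le_of_eq ?_
    calc ‖‖h • M‖ ^ 3‖ = (|h| * ‖M‖) ^ 3 := by
          rw [Real.norm_eq_abs, abs_of_nonneg (by positivity), h1]
      _ = ‖M‖ ^ 3 * |h| ^ 3 := by ring
      _ = ‖M‖ ^ 3 * ‖h ^ 3‖ := by rw [Real.norm_eq_abs, abs_pow]
  have hps : ∀ h : ℝ, (expSeries ℝ A).partialSum 3 (h • M)
      = 1 + h • M + (h ^ 2 / 2) • (M * M) := by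
    intro h
    rw [FormalMultilinearSeries.partialSum]
    rw [Finset.sum_range_succ, Finset.sum_range_succ, Finset.sum_range_one]
    rw [expSeries_apply_eq, expSeries_apply_eq, expSeries_apply_eq]
    congr 1
    · congr 1
      · simp
      · simp
    · rw [sq (h • M), smul_mul_smul_comm, smul_smul]
      norm_num
      congr 1
      ring
  have H3 := H2.trans hnorm
  refine H3.congr' ?_ (by rfl)
  filter_upwards with h
  simp [hps h]

lemma exp_taylor3 (c : ℝ) :
    (fun h : ℝ => Real.exp (c * h) - (1 + c * h + c ^ 2 * h ^ 2 / 2)) =O[𝓝 (0:ℝ)]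
      fun h => h ^ 3 := by
  have H := exp_taylor3_gen (A := ℝ) c
  refine H.congr' ?_ (by rfl)
  filter_upwards with h
  rw [smul_eq_mul, smul_eq_mul, ← Real.exp_eq_exp_ℝ, mul_comm h c]
  ring_nf

lemma expMulVec_taylor {N : ℕ} (M : Matrix (Fin N) (Fin N) ℝ) (u0 : Fin N → ℝ) (i : Fin N) :
    (fun h : ℝ => (exp (h • M)).mulVec u0 i
        - (u0 i + h * M.mulVec u0 i + h ^ 2 / 2 * M.mulVec (M.mulVec u0) i)) =O[𝓝 (0:ℝ)]
      fun h => h ^ 3 := by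
  letI : SeminormedRing (Matrix (Fin N) (Fin N) ℝ) := Matrix.linftyOpSemiNormedRing
  letI : NormedRing (Matrix (Fin N) (Fin N) ℝ) := Matrix.linftyOpNormedRing
  letI : NormedAlgebra ℝ (Matrix (Fin N) (Fin N) ℝ) := Matrix.linftyOpNormedAlgebra
  have H := exp_taylor3_gen (A := Matrix (Fin N) (Fin N) ℝ) M
  have key : ∀ h : ℝ, (exp (h • M)).mulVec u0 i
        - (u0 i + h * M.mulVec u0 i + h ^ 2 / 2 * M.mulVec (M.mulVec u0) i)
      = ((exp (h • M) - (1 + h • M + (h ^ 2 / 2) • (M * M))).mulVec u0) i := by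
    intro h
    rw [Matrix.sub_mulVec, Matrix.add_mulVec, Matrix.add_mulVec, Matrix.one_mulVec,
      Matrix.smul_mulVec, Matrix.smul_mulVec, Matrix.mulVec_mulVec]
    simp [Matrix.mulVec_mulVec]
  have H1 : (fun h : ℝ => ((exp (h • M) - (1 + h • M + (h ^ 2 / 2) • (M * M))).mulVec u0) i)
      =O[𝓝 (0:ℝ)] (fun h => exp (h • M) - (1 + h • M + (h ^ 2 / 2) • (M * M))) := by
    refine IsBigO.of_bound ‖u0‖ ?_
    filter_upwards with h
    calc ‖((exp (h • M) - (1 + h • M + (h ^ 2 / 2) • (M * M))).mulVec u0) i‖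
        ≤ ‖(exp (h • M) - (1 + h • M + (h ^ 2 / 2) • (M * M))).mulVec u0‖ :=
          norm_le_pi_norm _ i
      _ ≤ ‖exp (h • M) - (1 + h • M + (h ^ 2 / 2) • (M * M))‖ * ‖u0‖ :=
          Matrix.linfty_opNorm_mulVec _ _
      _ = ‖u0‖ * ‖exp (h • M) - (1 + h • M + (h ^ 2 / 2) • (M * M))‖ := mul_comm _ _
  refine ((H1.trans H).congr' ?_ (by rfl))
  filter_upwards with h
  rw [key h]

lemma integral_taylor {N : ℕ} (M : Matrix (Fin N) (Fin N) ℝ) (Q : Fin N → ℝ) (i : Fin N) :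
    (fun h : ℝ => (∫ s in (0:ℝ)..h, (exp ((h - s) • M)).mulVec Q) i
        - (h * Q i + h ^ 2 / 2 * M.mulVec Q i)) =O[𝓝[>] (0:ℝ)] fun h => h ^ 3 := by
  letI : SeminormedRing (Matrix (Fin N) (Fin N) ℝ) := Matrix.linftyOpSemiNormedRing
  letI : NormedRing (Matrix (Fin N) (Fin N) ℝ) := Matrix.linftyOpNormedRing
  letI : NormedAlgebra ℝ (Matrix (Fin N) (Fin N) ℝ) := Matrix.linftyOpNormedAlgebra
  -- continuity facts
  have hlip : LipschitzWith ‖Q‖₊ (fun A : Matrix (Fin N) (Fin N) ℝ => A.mulVec Q) := by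
    refine LipschitzWith.of_dist_le_mul ?_
    intro A B
    rw [dist_eq_norm, dist_eq_norm, ← Matrix.sub_mulVec]
    refine (Matrix.linfty_opNorm_mulVec _ _).trans ?_
    rw [mul_comm, coe_nnnorm]
  have hcont : Continuous fun t : ℝ => (exp (t • M)).mulVec Q :=
    hlip.continuous.comp ((show Continuous (exp : Matrix (Fin N) (Fin N) ℝ → _) by
      rw [← continuousOn_univ, ← Metric.eball_top_eq_univ (0 : Matrix (Fin N) (Fin N) ℝ),
        ← expSeries_radius_eq_top ℝ (Matrix (Fin N) (Fin N) ℝ)]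
      exact continuousOn_exp).comp (continuous_id.smul continuous_const))
  have hcont2 : Continuous fun t : ℝ => Q + t • M.mulVec Q :=
    continuous_const.add (continuous_id.smul continuous_const)
  -- bound for the remainder of the matrix exponential
  obtain ⟨C, hC0, hCw⟩ := (exp_taylor3_gen (A := Matrix (Fin N) (Fin N) ℝ) M).exists_nonneg
  have hCb := hCw.bound
  rw [Metric.eventually_nhds_iff] at hCb
  obtain ⟨δ, hδ, hB⟩ := hCb
  set K : ℝ := (C + ‖M * M‖ / 2) * ‖Q‖ with hK
  have hKnn : 0 ≤ K := by positivity
  rw [isBigO_iff]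
  refine ⟨K, ?_⟩
  have hmem : Set.Ioo (0:ℝ) (min δ 1) ∈ 𝓝[>] (0:ℝ) :=
    Ioo_mem_nhdsGT_of_mem ⟨le_refl _, lt_min hδ one_pos⟩
  filter_upwards [hmem] with h hh
  obtain ⟨hh0, hh1⟩ := hh
  have hhδ : h < δ := lt_of_lt_of_le hh1 (min_le_left _ _)
  have hh1' : h ≤ 1 := le_of_lt (lt_of_lt_of_le hh1 (min_le_right _ _))
  -- change of variables
  have hchg : (∫ s in (0:ℝ)..h, (exp ((h - s) • M)).mulVec Q)
      = ∫ t in (0:ℝ)..h, (exp (t • M)).mulVec Q := by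
    have := intervalIntegral.integral_comp_sub_left
      (fun t : ℝ => (exp (t • M)).mulVec Q) h (a := 0) (b := h)
    simpa using this
  -- the remainder function
  set ρ : ℝ → (Fin N → ℝ) := fun t => (exp (t • M)).mulVec Q - (Q + t • M.mulVec Q) with hρ
  have hint1 : IntervalIntegrable (fun t : ℝ => (exp (t • M)).mulVec Q)
      MeasureTheory.volume 0 h := hcont.intervalIntegrable _ _
  have hint2 : IntervalIntegrable (fun t : ℝ => Q + t • M.mulVec Q)
      MeasureTheory.volume 0 h := hcont2.intervalIntegrable _ _
  have hsplit : (∫ t in (0:ℝ)..h, (exp (t • M)).mulVec Q)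
      = (∫ t in (0:ℝ)..h, (Q + t • M.mulVec Q)) + ∫ t in (0:ℝ)..h, ρ t := by
    rw [← intervalIntegral.integral_add hint2 (hint1.sub hint2)]
    congr 1
    funext t
    simp [hρ]
  have hpoly : (∫ t in (0:ℝ)..h, (Q + t • M.mulVec Q))
      = h • Q + (h ^ 2 / 2) • M.mulVec Q := by
    have hintc : IntervalIntegrable (fun t : ℝ => t • M.mulVec Q) MeasureTheory.volume 0 h :=
      Continuous.intervalIntegrable (by fun_prop) _ _
    rw [intervalIntegral.integral_add (continuous_const.intervalIntegrable _ _) hintc,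
      intervalIntegral.integral_const, intervalIntegral.integral_smul_const, integral_id]
    norm_num
  -- bound on ρ
  have hρb : ∀ t ∈ Set.uIoc (0:ℝ) h, ‖ρ t‖ ≤ K * h ^ 2 := by
    intro t ht
    rw [Set.uIoc_of_le (le_of_lt hh0)] at ht
    obtain ⟨ht0, hth⟩ := ht
    have htδ : dist t 0 < δ := by
      rw [Real.dist_eq, sub_zero, abs_of_pos ht0]; exact lt_of_le_of_lt hth hhδ
    have hBt := hB htδ
    have hQ : ρ t = (exp (t • M) - (1 + t • M + (t ^ 2 / 2) • (M * M))).mulVec Q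
        + ((t ^ 2 / 2) • (M * M)).mulVec Q := by
      simp only [hρ]
      rw [Matrix.sub_mulVec, Matrix.add_mulVec, Matrix.add_mulVec, Matrix.one_mulVec,
        Matrix.smul_mulVec, Matrix.smul_mulVec]
      abel
    have h1 : ‖(exp (t • M) - (1 + t • M + (t ^ 2 / 2) • (M * M))).mulVec Q‖
        ≤ (C * h ^ 2) * ‖Q‖ := by
      refine (Matrix.linfty_opNorm_mulVec _ _).trans ?_
      refine mul_le_mul_of_nonneg_right ?_ (norm_nonneg _)
      refine hBt.trans ?_
      have : ‖t ^ 3‖ = t ^ 3 := by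
        rw [Real.norm_eq_abs, abs_of_nonneg (by positivity)]
      rw [this]
      have ht3 : t ^ 3 ≤ h ^ 2 := by nlinarith
      nlinarith
    have h2 : ‖((t ^ 2 / 2) • (M * M)).mulVec Q‖ ≤ (‖M * M‖ / 2 * h ^ 2) * ‖Q‖ := by
      refine (Matrix.linfty_opNorm_mulVec _ _).trans ?_
      refine mul_le_mul_of_nonneg_right ?_ (norm_nonneg _)
      rw [norm_smul, Real.norm_eq_abs, abs_of_nonneg (by positivity)]
      have ht2 : t ^ 2 ≤ h ^ 2 := by nlinarith
      nlinarith [norm_nonneg (M * M)]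
    calc ‖ρ t‖ ≤ ‖(exp (t • M) - (1 + t • M + (t ^ 2 / 2) • (M * M))).mulVec Q‖
          + ‖((t ^ 2 / 2) • (M * M)).mulVec Q‖ := by rw [hQ]; exact norm_add_le _ _
      _ ≤ (C * h ^ 2) * ‖Q‖ + (‖M * M‖ / 2 * h ^ 2) * ‖Q‖ := add_le_add h1 h2
      _ = K * h ^ 2 := by rw [hK]; ring
  have hρint : ‖∫ t in (0:ℝ)..h, ρ t‖ ≤ K * h ^ 2 * h := by
    have := intervalIntegral.norm_integral_le_of_norm_le_const hρb
    rwa [sub_zero, abs_of_pos hh0] at this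
  -- conclude
  have hval : (∫ s in (0:ℝ)..h, (exp ((h - s) • M)).mulVec Q) i
        - (h * Q i + h ^ 2 / 2 * M.mulVec Q i)
      = (∫ t in (0:ℝ)..h, ρ t) i := by
    rw [hchg, hsplit, hpoly]
    simp [smul_eq_mul]
  rw [hval]
  calc ‖(∫ t in (0:ℝ)..h, ρ t) i‖ ≤ ‖∫ t in (0:ℝ)..h, ρ t‖ := norm_le_pi_norm _ i
    _ ≤ K * h ^ 2 * h := hρint
    _ = K * ‖h ^ 3‖ := by
        rw [Real.norm_eq_abs, abs_of_nonneg (by positivity)]; ring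


lemma ev_abs_le_one : ∀ᶠ h : ℝ in 𝓝[>] (0:ℝ), |h| ≤ 1 := by
  have : Set.Ioo (0:ℝ) 1 ∈ 𝓝[>] (0:ℝ) := Ioo_mem_nhdsGT_of_mem ⟨le_refl _, one_pos⟩
  filter_upwards [this] with h hh
  rw [abs_of_pos hh.1]; exact hh.2.le

lemma pow_succ_bigO (n : ℕ) : (fun h : ℝ => h ^ (n+1)) =O[𝓝[>] (0:ℝ)] fun h => h ^ n := by
  refine IsBigO.of_bound 1 ?_
  filter_upwards [ev_abs_le_one] with h hh
  rw [Real.norm_eq_abs, Real.norm_eq_abs, abs_pow, abs_pow, one_mul, pow_succ]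
  exact mul_le_of_le_one_right (by positivity) hh

lemma id_bigO_one : (fun h : ℝ => h) =O[𝓝[>] (0:ℝ)] fun _ => (1:ℝ) := by
  refine IsBigO.of_bound 1 ?_
  filter_upwards [ev_abs_le_one] with h hh
  simpa using hh

section LNpart

variable {N : ℕ} (M : Matrix (Fin N) (Fin N) ℝ) (Q u0 : Fin N → ℝ)

noncomputable def wone : Fin N → ℝ := fun j => M.mulVec u0 j + Q j
noncomputable def wtwo : Fin N → ℝ := fun i => M.mulVec (wone M Q u0) i

lemma mulVec_split (x : Fin N → ℝ) (i : Fin N) :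
    M.mulVec x i = M i i * x i + ∑ j ∈ Finset.univ.erase i, M i j * x j := by
  rw [Matrix.mulVec, dotProduct]
  rw [← Finset.add_sum_erase Finset.univ (fun j => M i j * x j) (Finset.mem_univ i)]

lemma wone_eq (i : Fin N) : wone M Q u0 i = M i i * u0 i + aCoef M Q u0 i := by
  rw [wone, aCoef, mulVec_split]; ring

lemma wtwo_eq (i : Fin N) :
    wtwo M Q u0 i = M i i * wone M Q u0 i
      + ∑ j ∈ Finset.univ.erase i, M i j * wone M Q u0 j := by
  rw [wtwo, mulVec_split]

lemma cn1_first (hM : ∀ i, M i i < 0) (j : Fin N) :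
    (fun h : ℝ => cnStep M Q u0 h u0 j - (u0 j + h * wone M Q u0 j)) =O[𝓝[>] (0:ℝ)]
      fun h => h ^ 2 := by
  have hc : M j j ≠ 0 := (hM j).ne
  have hE : (fun h : ℝ => Real.exp (M j j * h)
      - (1 + M j j * h + (M j j) ^ 2 * h ^ 2 / 2)) =O[𝓝[>] (0:ℝ)] fun h => h ^ 3 :=
    (exp_taylor3 (M j j)).mono nhdsWithin_le_nhds
  have key : ∀ h : ℝ, cnStep M Q u0 h u0 j - (u0 j + h * wone M Q u0 j)
      = (u0 j + aCoef M Q u0 j / M j j)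
          * (Real.exp (M j j * h) - (1 + M j j * h + (M j j) ^ 2 * h ^ 2 / 2))
        + ((u0 j * (M j j) ^ 2 + aCoef M Q u0 j * M j j) / 2) * h ^ 2 := by
    intro h
    rw [wone_eq, cnStep]
    have hinv : M j j * (M j j)⁻¹ = 1 := mul_inv_cancel₀ hc
    field_simp
    ring
  have t1 : (fun h : ℝ => (u0 j + aCoef M Q u0 j / M j j)
      * (Real.exp (M j j * h) - (1 + M j j * h + (M j j) ^ 2 * h ^ 2 / 2)))
      =O[𝓝[>] (0:ℝ)] fun h => h ^ 2 :=
    (hE.const_mul_left _).trans (pow_succ_bigO 2)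
  have t2 : (fun h : ℝ => ((u0 j * (M j j) ^ 2 + aCoef M Q u0 j * M j j) / 2) * h ^ 2)
      =O[𝓝[>] (0:ℝ)] fun h => h ^ 2 :=
    (isBigO_refl (fun h : ℝ => h ^ 2) _).const_mul_left _
  refine ((t1.add t2).congr' ?_ (by rfl))
  filter_upwards with h
  rw [key h]

lemma ln_step_second (hM : ∀ i, M i i < 0) (v : ℝ → Fin N → ℝ)
    (hv : ∀ j, (fun h : ℝ => v h j - (u0 j + h * wone M Q u0 j)) =O[𝓝[>] (0:ℝ)]
      fun h => h ^ 2) (i : Fin N) :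
    (fun h : ℝ => lnStep M Q u0 h (v h) i
        - (u0 i + h * wone M Q u0 i + h ^ 2 / 2 * wtwo M Q u0 i)) =O[𝓝[>] (0:ℝ)]
      fun h => h ^ 3 := by
  have hc : M i i ≠ 0 := (hM i).ne
  set c := M i i with hcdef
  set A := aCoef M Q u0 i with hA
  set r := ∑ j ∈ Finset.univ.erase i, M i j * wone M Q u0 j with hr
  -- (a) the neighbour sum
  have ha : (fun h : ℝ => aCoef M Q (v h) i - A - h * r) =O[𝓝[>] (0:ℝ)]
      fun h => h ^ 2 := by
    have eq1 : ∀ h : ℝ, aCoef M Q (v h) i - A - h * r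
        = ∑ j ∈ Finset.univ.erase i, M i j * (v h j - (u0 j + h * wone M Q u0 j)) := by
      intro h
      have : ∑ j ∈ Finset.univ.erase i, M i j * (v h j - (u0 j + h * wone M Q u0 j))
          = (∑ j ∈ Finset.univ.erase i, M i j * v h j)
            - ((∑ j ∈ Finset.univ.erase i, M i j * u0 j)
              + h * ∑ j ∈ Finset.univ.erase i, M i j * wone M Q u0 j) := by
        rw [Finset.mul_sum, ← Finset.sum_add_distrib, ← Finset.sum_sub_distrib]
        refine Finset.sum_congr rfl fun j _ => by ring
      rw [this, hA, ← hr, aCoef, aCoef]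
      ring
    have hsum : (fun h : ℝ => ∑ j ∈ Finset.univ.erase i,
        M i j * (v h j - (u0 j + h * wone M Q u0 j))) =O[𝓝[>] (0:ℝ)] fun h => h ^ 2 := by
      refine IsBigO.fun_sum fun j _ => ?_
      exact (hv j).const_mul_left _
    refine hsum.congr' ?_ (by rfl)
    filter_upwards with h
    rw [eq1 h]
  -- (b) the slope
  have hs : (fun h : ℝ => sCoef M Q u0 h (v h) i - r) =O[𝓝[>] (0:ℝ)] fun h => h := by
    obtain ⟨C, hC⟩ := ha.bound
    refine IsBigO.of_bound C ?_
    filter_upwards [hC, self_mem_nhdsWithin] with h h1 h2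
    have hh0 : (0:ℝ) < h := h2
    have hne : h ≠ 0 := ne_of_gt hh0
    have heq : sCoef M Q u0 h (v h) i - r = (aCoef M Q (v h) i - A - h * r) / h := by
      rw [sCoef, ← hA]
      field_simp
    rw [heq, Real.norm_eq_abs, abs_div, abs_of_pos hh0, div_le_iff₀ hh0]
    rw [Real.norm_eq_abs] at h1 ⊢
    calc |aCoef M Q (v h) i - A - h * r| ≤ C * |h ^ 2| := h1
      _ = C * |h| * h := by rw [abs_pow, abs_of_pos hh0]; ring
  -- s is bounded
  have hsb : (fun h : ℝ => sCoef M Q u0 h (v h) i) =O[𝓝[>] (0:ℝ)] fun _ => (1:ℝ) := by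
    have h1 := (hs.trans id_bigO_one).add (isBigO_const_const r (one_ne_zero) (𝓝[>] (0:ℝ)))
    refine h1.congr' ?_ (by rfl)
    filter_upwards with h
    ring
  have hE : (fun h : ℝ => Real.exp (c * h) - (1 + c * h + c ^ 2 * h ^ 2 / 2))
      =O[𝓝[>] (0:ℝ)] fun h => h ^ 3 := (exp_taylor3 c).mono nhdsWithin_le_nhds
  -- the main algebraic identity
  have key : ∀ h : ℝ, lnStep M Q u0 h (v h) i
        - (u0 i + h * wone M Q u0 i + h ^ 2 / 2 * wtwo M Q u0 i)
      = (u0 i + A * c⁻¹ + sCoef M Q u0 h (v h) i * (c⁻¹) ^ 2)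
          * (Real.exp (c * h) - (1 + c * h + c ^ 2 * h ^ 2 / 2))
        + (sCoef M Q u0 h (v h) i - r) * (h ^ 2 / 2) := by
    intro h
    rw [lnStep, wtwo_eq, wone_eq, ← hr, ← hA, ← hcdef]
    field_simp
    ring
  -- assemble the big-O facts
  have t1 : (fun h : ℝ => (u0 i + A * c⁻¹ + sCoef M Q u0 h (v h) i * (c⁻¹) ^ 2)
      * (Real.exp (c * h) - (1 + c * h + c ^ 2 * h ^ 2 / 2))) =O[𝓝[>] (0:ℝ)]
      fun h => h ^ 3 := by
    have hfac : (fun h : ℝ => u0 i + A * c⁻¹ + sCoef M Q u0 h (v h) i * (c⁻¹) ^ 2)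
        =O[𝓝[>] (0:ℝ)] fun _ => (1:ℝ) := by
      have h1 : (fun h : ℝ => sCoef M Q u0 h (v h) i * (c⁻¹) ^ 2)
          =O[𝓝[>] (0:ℝ)] fun _ => (1:ℝ) := by
        refine (hsb.const_mul_left ((c⁻¹) ^ 2)).congr' ?_ (by rfl)
        filter_upwards with h
        ring
      have h2 := (isBigO_const_const (u0 i + A * c⁻¹) (one_ne_zero) (𝓝[>] (0:ℝ))).add h1
      refine h2.congr' (by filter_upwards with h; ring) ?_
      filter_upwards with h
      norm_num
    have := hfac.mul hE
    refine this.congr' (by rfl) ?_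
    filter_upwards with h
    rw [one_mul]
  have t2 : (fun h : ℝ => (sCoef M Q u0 h (v h) i - r) * (h ^ 2 / 2)) =O[𝓝[>] (0:ℝ)]
      fun h => h ^ 3 := by
    have := hs.mul (isBigO_refl (fun h : ℝ => h ^ 2 / 2) (𝓝[>] (0:ℝ)))
    refine IsBigO.trans this ?_
    refine IsBigO.of_bound 1 ?_
    filter_upwards with h
    rw [Real.norm_eq_abs, Real.norm_eq_abs, abs_mul, abs_div, abs_pow, abs_pow, one_mul]
    have : |(2:ℝ)| = 2 := by norm_num
    rw [this, pow_succ]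
    nlinarith [abs_nonneg h, pow_nonneg (abs_nonneg h) 2]
  refine ((t1.add t2).congr' ?_ (by rfl))
  filter_upwards with h
  rw [key h]

end LNpart


section Assemble

variable {N : ℕ} (M : Matrix (Fin N) (Fin N) ℝ) (Q u0 : Fin N → ℝ)

lemma second_to_first (v : ℝ → Fin N → ℝ)
    (hv : ∀ i, (fun h : ℝ => v h i
        - (u0 i + h * wone M Q u0 i + h ^ 2 / 2 * wtwo M Q u0 i)) =O[𝓝[>] (0:ℝ)]
      fun h => h ^ 3) (j : Fin N) :
    (fun h : ℝ => v h j - (u0 j + h * wone M Q u0 j)) =O[𝓝[>] (0:ℝ)] fun h => h ^ 2 := by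
  have h1 := (hv j).trans (pow_succ_bigO 2)
  have h2 : (fun h : ℝ => h ^ 2 / 2 * wtwo M Q u0 j) =O[𝓝[>] (0:ℝ)] fun h => h ^ 2 := by
    refine ((isBigO_refl (fun h : ℝ => h ^ 2) _).const_mul_left (wtwo M Q u0 j / 2)).congr' ?_
      (by rfl)
    filter_upwards with h
    ring
  refine (h1.add h2).congr' ?_ (by rfl)
  filter_upwards with h
  ring

lemma ln_iter_second (hM : ∀ i, M i i < 0) (n : ℕ) : ∀ i : Fin N,
    (fun h : ℝ => (lnStep M Q u0 h)^[n + 1] (cnStep M Q u0 h u0) i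
        - (u0 i + h * wone M Q u0 i + h ^ 2 / 2 * wtwo M Q u0 i)) =O[𝓝[>] (0:ℝ)]
      fun h => h ^ 3 := by
  induction n with
  | zero =>
    intro i
    have := ln_step_second M Q u0 hM (fun h => cnStep M Q u0 h u0)
      (cn1_first M Q u0 hM) i
    simpa using this
  | succ n ih =>
    intro i
    have hfirst := second_to_first M Q u0
      (fun h => (lnStep M Q u0 h)^[n + 1] (cnStep M Q u0 h u0)) ih
    have := ln_step_second M Q u0 hM
      (fun h => (lnStep M Q u0 h)^[n + 1] (cnStep M Q u0 h u0)) hfirst i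
    refine this.congr' ?_ (by rfl)
    filter_upwards with h
    rw [← Function.iterate_succ_apply' (lnStep M Q u0 h)]

lemma uex_second (i : Fin N) :
    (fun h : ℝ => uex M Q u0 h i
        - (u0 i + h * wone M Q u0 i + h ^ 2 / 2 * wtwo M Q u0 i)) =O[𝓝[>] (0:ℝ)]
      fun h => h ^ 3 := by
  have h1 := (expMulVec_taylor M u0 i).mono
    (nhdsWithin_le_nhds : 𝓝[>] (0:ℝ) ≤ 𝓝 0)
  have h2 := integral_taylor M Q i
  have key : ∀ h : ℝ, uex M Q u0 h i
        - (u0 i + h * wone M Q u0 i + h ^ 2 / 2 * wtwo M Q u0 i)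
      = ((exp (h • M)).mulVec u0 i
          - (u0 i + h * M.mulVec u0 i + h ^ 2 / 2 * M.mulVec (M.mulVec u0) i))
        + ((∫ s in (0:ℝ)..h, (exp ((h - s) • M)).mulVec Q) i
          - (h * Q i + h ^ 2 / 2 * M.mulVec Q i)) := by
    intro h
    have hw1 : wone M Q u0 = M.mulVec u0 + Q := rfl
    have hw2 : wtwo M Q u0 i = M.mulVec (M.mulVec u0) i + M.mulVec Q i := by
      rw [wtwo, hw1, Matrix.mulVec_add, Pi.add_apply]
    rw [uex, Pi.add_apply, hw2, hw1, Pi.add_apply]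
    ring
  refine (h1.add h2).congr' ?_ (by rfl)
  filter_upwards with h
  rw [key h]

end Assemble
end AuxProof

/-- Theorem 1 (linear-neighbour part): for every `k ≥ 2`, the `k`-stage
linear-neighbour method has local truncation error `O(h³)` as `h → 0⁺`,
i.e. all methods `LN_2, LN_3, …` are at least second order. -/
theorem ln_iterates_second_order {N : ℕ} (hN : 1 ≤ N) (M : Matrix (Fin N) (Fin N) ℝ)
    (hM : ∀ i, M i i < 0) (Q u0 : Fin N → ℝ) (k : ℕ) (hk : 2 ≤ k) (i : Fin N) :
    (fun h : ℝ => LN M Q u0 k h i - uex M Q u0 h i)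
      =O[nhdsWithin 0 (Set.Ioi 0)] fun h : ℝ => h ^ 3 := by
  obtain ⟨n, rfl⟩ : ∃ n, k = n + 2 := ⟨k - 2, by omega⟩
  have hln := ln_iter_second M Q u0 hM n i
  have hux := uex_second M Q u0 i
  have := hln.sub hux
  refine this.congr' ?_ (by rfl)
  filter_upwards with h
  have : n + 2 - 1 = n + 1 := by omega
  rw [LN, this]
  ring
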